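/- Let x and y be distinct positively-valued finite payoff streams (m_x ≥ 0, m_y ≥ 0), let d be a discount function, and let H : [0,1] → ℝ be continuous and strictly increasing with H(0) = 0. Then the maximum over joint payoff functions b ∈ B(x,y) of H( |Σ_{t_x,t_y} b(t_x,t_y)·(d(t_x) − d(t_y))| / Σ_{t_x,t_y} |b(t_x,t_y)·(d(t_x) − d(t_y))| ) is attained and equals H( |DU(x) − DU(y)| / d_CPF(x,y) ), where d_CPF is the generalized CPF distance. -/

import Mathlib

open Finset

/-- A finite payoff stream: finitely many nonzero payoffs, all at times t ≥ 0. -/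
structure PayStream where
  m : ℝ →₀ ℝ
  zero_of_neg : ∀ t, t < 0 → m t = 0

namespace PayStream

/-- The cumulative payoff function M_x(t). -/
noncomputable def cumul (x : PayStream) (t : ℝ) : ℝ :=
  ∑ s ∈ x.m.support.filter (fun s => s ≤ t), x.m s

/-- Discounted utility DU(x) = Σ_t d(t)·m_x(t). -/
noncomputable def DU (d : ℝ → ℝ) (x : PayStream) : ℝ :=
  x.m.sum (fun t a => d t * a)

/-- The generalized CPF distance: the times t_0 < ⋯ < t_{n-1} enumerate the finite
points of T_x ∪ T_y ∪ {0}, and the final factor d(t_n) with t_n = ∞ equals 0. -/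
noncomputable def dCPF (d : ℝ → ℝ) (x y : PayStream) : ℝ :=
  let L := (x.m.support ∪ y.m.support ∪ {0}).sort (· ≤ ·)
  ∑ k ∈ Finset.range L.length,
    |x.cumul (L.getD k 0) - y.cumul (L.getD k 0)| *
      (d (L.getD k 0) - if k + 1 < L.length then d (L.getD (k + 1) 0) else 0)

/-- Temporal dominance: M_x(t) ≥ M_y(t) at every time. -/
def TDom (x y : PayStream) : Prop := ∀ t : ℝ, y.cumul t ≤ x.cumul t

/-- The topology of weak convergence of the associated finitely supported signed
measures: the topology induced by testing against bounded continuous functions. -/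
instance : TopologicalSpace PayStream :=
  TopologicalSpace.induced
    (fun x => fun g : BoundedContinuousFunction ℝ ℝ => x.m.sum (fun t a => a * g t))
    inferInstance

end PayStream

/-- A discount function: strictly decreasing on [0,∞], positive at finite times,
with d(∞) = 0 (encoded by positivity and strict decrease on [0,∞)). -/
def IsDiscount (d : ℝ → ℝ) : Prop :=
  StrictAntiOn d (Set.Ici 0) ∧ ∀ t ∈ Set.Ici (0:ℝ), 0 < d t

/-- Extension of a discount function to [0,∞], with d(∞) = 0. -/
noncomputable def dext (d : ℝ → ℝ) : WithTop ℝ → ℝ :=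
  WithTop.recTopCoe 0 d

/-- B(x,y): the set of joint payoff functions for two payoff streams. -/
def IsJointPayoff (x y : PayStream) (b : (WithTop ℝ × WithTop ℝ) →₀ ℝ) : Prop :=
  b (⊤, ⊤) = 0 ∧
  (∀ t : ℝ, (b.sum fun p v => if p.1 = (t : WithTop ℝ) then v else 0) = x.m t) ∧
  (∀ t : ℝ, (b.sum fun p v => if p.2 = (t : WithTop ℝ) then v else 0) = y.m t)

/-- The ease-of-comparison value of the attribute representation induced by a joint
payoff function. -/
noncomputable def jointVal (H : ℝ → ℝ) (d : ℝ → ℝ)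
    (b : (WithTop ℝ × WithTop ℝ) →₀ ℝ) : ℝ :=
  H (|b.sum fun p v => v * (dext d p.1 - dext d p.2)| /
      b.sum fun p v => |v * (dext d p.1 - dext d p.2)|)

noncomputable section AuxCPF
open MeasureTheory Set

namespace CPFAux

variable (d : ℝ → ℝ)

/-- The step function whose integral over (0,∞) of the absolute value is the CPF distance. -/
def Psi (x y : PayStream) (s : ℝ) : ℝ :=
  ∑ t ∈ x.m.support ∪ y.m.support, (x.m t - y.m t) * (Set.Ioc 0 (d t)).indicator 1 s

lemma Psi_eq_sum {x y : PayStream} {T : Finset ℝ} (hT : x.m.support ∪ y.m.support ⊆ T)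
    (s : ℝ) :
    Psi d x y s = ∑ t ∈ T, (x.m t - y.m t) * (Set.Ioc 0 (d t)).indicator 1 s := by
  refine Finset.sum_subset hT (fun t _ ht => ?_)
  have hx : x.m t = 0 := by
    by_contra h
    exact ht (Finset.mem_union_left _ (Finsupp.mem_support_iff.2 h))
  have hy : y.m t = 0 := by
    by_contra h
    exact ht (Finset.mem_union_right _ (Finsupp.mem_support_iff.2 h))
  simp [hx, hy]

lemma measurable_Psi (x y : PayStream) : Measurable (Psi d x y) :=
  Finset.measurable_sum _ fun t _ =>
    ((measurable_one.indicator measurableSet_Ioc).const_mul _)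

lemma integrable_ind (a b : ℝ) (c : ℝ) (S : Set ℝ) :
    Integrable (fun s => c * (Set.Ioc a b).indicator (1 : ℝ → ℝ) s) (volume.restrict S) := by
  refine Integrable.const_mul ?_ c
  rw [integrable_indicator_iff measurableSet_Ioc]
  refine integrableOn_const (ne_of_lt ?_)
  exact lt_of_le_of_lt (Measure.restrict_le_self _) measure_Ioc_lt_top

lemma integrableOn_Psi (x y : PayStream) : IntegrableOn (Psi d x y) (Set.Ioi 0) := by
  unfold IntegrableOn
  refine integrable_finset_sum _ fun t _ => integrable_ind _ _ _ _

lemma integral_ind {a b : ℝ} (h0 : 0 ≤ a) (hab : a ≤ b) :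
    ∫ s in Set.Ioi (0:ℝ), (Set.Ioc a b).indicator (1 : ℝ → ℝ) s = b - a := by
  rw [MeasureTheory.integral_indicator measurableSet_Ioc, Measure.restrict_restrict measurableSet_Ioc]
  have : Set.Ioc a b ∩ Set.Ioi 0 = Set.Ioc a b := by
    refine Set.inter_eq_left.2 (fun s hs => ?_)
    exact lt_of_le_of_lt h0 hs.1
  rw [this]
  simp only [Pi.one_apply]
  rw [setIntegral_const, smul_eq_mul, mul_one, Real.volume_real_Ioc_of_le hab]

/-- The integral form of the generalized CPF distance. -/
def ICPF (x y : PayStream) : ℝ := ∫ s in Set.Ioi (0:ℝ), |Psi d x y s|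

lemma ICPF_nonneg (x y : PayStream) : 0 ≤ ICPF d x y :=
  integral_nonneg fun s => abs_nonneg _

lemma Psi_symm (x y : PayStream) (s : ℝ) : Psi d y x s = -Psi d x y s := by
  rw [Psi, Psi, Finset.union_comm, ← Finset.sum_neg_distrib]
  exact Finset.sum_congr rfl fun t _ => by ring

lemma ICPF_symm (x y : PayStream) : ICPF d y x = ICPF d x y := by
  unfold ICPF
  refine integral_congr_ae (Filter.Eventually.of_forall fun s => ?_)
  show |Psi d y x s| = |Psi d x y s|
  rw [Psi_symm, abs_neg]

end CPFAux
namespace CPFAux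
open scoped Classical

lemma joint_sum_fst {x y : PayStream} {b : (WithTop ℝ × WithTop ℝ) →₀ ℝ}
    (hb : IsJointPayoff x y b) (g : WithTop ℝ → ℝ) (hg : g ⊤ = 0) :
    (b.sum fun p v => v * g p.1) = x.m.sum fun t a => a * g ↑t := by
  classical
  have hfiber : ∀ t : ℝ,
      (∑ p ∈ b.support.filter (fun p => p.1 = (t : WithTop ℝ)), b p) = x.m t := by
    intro t
    have h := hb.2.1 t
    rw [Finsupp.sum] at h
    rw [Finset.sum_filter]
    exact h
  set F : Finset (WithTop ℝ) :=
    b.support.image Prod.fst ∪ x.m.support.image (fun t : ℝ => (t : WithTop ℝ)) with hF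
  have key : ∀ j ∈ F, (∑ p ∈ b.support.filter (fun p => p.1 = j), b p * g p.1)
      = g j * ∑ p ∈ b.support.filter (fun p => p.1 = j), b p := by
    intro j _
    rw [Finset.mul_sum]
    refine Finset.sum_congr rfl fun p hp => ?_
    rw [(Finset.mem_filter.1 hp).2]; ring
  have hL : (b.sum fun p v => v * g p.1)
      = ∑ j ∈ F, g j * ∑ p ∈ b.support.filter (fun p => p.1 = j), b p := by
    rw [Finsupp.sum,
      ← Finset.sum_fiberwise_of_maps_to
        (fun p hp => Finset.mem_union_left _ (Finset.mem_image_of_mem Prod.fst hp) :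
          ∀ p ∈ b.support, p.1 ∈ F) (fun p => b p * g p.1)]
    rw [← hF]
    exact Finset.sum_congr rfl key
  rw [hL]
  have hR : (x.m.sum fun t a => a * g ↑t)
      = ∑ j ∈ F, g j * ∑ p ∈ b.support.filter (fun p => p.1 = j), b p := by
    rw [Finsupp.sum]
    rw [← Finset.sum_subset (Finset.subset_union_right (s₁ := b.support.image Prod.fst))
      (fun j _ hj => ?_)]
    · rw [Finset.sum_image (fun a _ c _ h => WithTop.coe_injective h)]
      refine Finset.sum_congr rfl fun t _ => ?_
      rw [hfiber t]; ring
    · -- j ∈ F, j ∉ image coe of x.support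
      induction j using WithTop.recTopCoe with
      | top => simp [hg]
      | coe t =>
        have ht : t ∉ x.m.support := fun h => hj (Finset.mem_image_of_mem _ h)
        have : x.m t = 0 := Finsupp.notMem_support_iff.1 ht
        rw [hfiber t, this, mul_zero]
  rw [hR]

lemma joint_sum_snd {x y : PayStream} {b : (WithTop ℝ × WithTop ℝ) →₀ ℝ}
    (hb : IsJointPayoff x y b) (g : WithTop ℝ → ℝ) (hg : g ⊤ = 0) :
    (b.sum fun p v => v * g p.2) = y.m.sum fun t a => a * g ↑t := by
  classical
  have hfiber : ∀ t : ℝ,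
      (∑ p ∈ b.support.filter (fun p => p.2 = (t : WithTop ℝ)), b p) = y.m t := by
    intro t
    have h := hb.2.2 t
    rw [Finsupp.sum] at h
    rw [Finset.sum_filter]
    exact h
  set F : Finset (WithTop ℝ) :=
    b.support.image Prod.snd ∪ y.m.support.image (fun t : ℝ => (t : WithTop ℝ)) with hF
  have key : ∀ j ∈ F, (∑ p ∈ b.support.filter (fun p => p.2 = j), b p * g p.2)
      = g j * ∑ p ∈ b.support.filter (fun p => p.2 = j), b p := by
    intro j _
    rw [Finset.mul_sum]
    refine Finset.sum_congr rfl fun p hp => ?_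
    rw [(Finset.mem_filter.1 hp).2]; ring
  have hL : (b.sum fun p v => v * g p.2)
      = ∑ j ∈ F, g j * ∑ p ∈ b.support.filter (fun p => p.2 = j), b p := by
    rw [Finsupp.sum,
      ← Finset.sum_fiberwise_of_maps_to
        (fun p hp => Finset.mem_union_left _ (Finset.mem_image_of_mem Prod.snd hp) :
          ∀ p ∈ b.support, p.2 ∈ F) (fun p => b p * g p.2)]
    rw [← hF]
    exact Finset.sum_congr rfl key
  rw [hL]
  have hR : (y.m.sum fun t a => a * g ↑t)
      = ∑ j ∈ F, g j * ∑ p ∈ b.support.filter (fun p => p.2 = j), b p := by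
    rw [Finsupp.sum]
    rw [← Finset.sum_subset (Finset.subset_union_right (s₁ := b.support.image Prod.snd))
      (fun j _ hj => ?_)]
    · rw [Finset.sum_image (fun a _ c _ h => WithTop.coe_injective h)]
      refine Finset.sum_congr rfl fun t _ => ?_
      rw [hfiber t]; ring
    · induction j using WithTop.recTopCoe with
      | top => simp [hg]
      | coe t =>
        have ht : t ∉ y.m.support := fun h => hj (Finset.mem_image_of_mem _ h)
        have : y.m t = 0 := Finsupp.notMem_support_iff.1 ht
        rw [hfiber t, this, mul_zero]
  rw [hR]

/-- For any joint payoff function and any `g` vanishing at `⊤`,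
the "difference" sum only depends on the marginals. -/
lemma joint_sum_diff {x y : PayStream} {b : (WithTop ℝ × WithTop ℝ) →₀ ℝ}
    (hb : IsJointPayoff x y b) (g : WithTop ℝ → ℝ) (hg : g ⊤ = 0) :
    (b.sum fun p v => v * (g p.1 - g p.2))
      = (x.m.sum fun t a => a * g ↑t) - (y.m.sum fun t a => a * g ↑t) := by
  have : (b.sum fun p v => v * (g p.1 - g p.2))
      = (b.sum fun p v => v * g p.1) - (b.sum fun p v => v * g p.2) := by
    rw [← Finsupp.sum_sub]
    exact Finsupp.sum_congr fun p _ => by ring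
  rw [this, joint_sum_fst hb g hg, joint_sum_snd hb g hg]

end CPFAux
namespace CPFAux
open MeasureTheory Set

lemma measurable_sign : Measurable Real.sign := by
  have h : Real.sign = fun x : ℝ => if x < 0 then (-1:ℝ) else if 0 < x then 1 else 0 := by
    funext x; rfl
  rw [h]
  exact Measurable.ite (measurableSet_lt measurable_id measurable_const) measurable_const
    (Measurable.ite (measurableSet_lt measurable_const measurable_id) measurable_const
      measurable_const)

lemma sign_abs_le (x : ℝ) : |Real.sign x| ≤ 1 := by
  rcases lt_trichotomy x 0 with h|h|h
  · simp [Real.sign_of_neg h]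
  · simp [h, Real.sign_zero]
  · simp [Real.sign_of_pos h]

lemma sign_mul_self (x : ℝ) : Real.sign x * x = |x| := by
  rcases lt_trichotomy x 0 with h|h|h
  · rw [Real.sign_of_neg h, abs_of_neg h]; ring
  · simp [h]
  · rw [Real.sign_of_pos h, abs_of_pos h]; ring

variable (d : ℝ → ℝ)

/-- The potential function (Kantorovich dual variable). -/
def phi (x y : PayStream) (a : ℝ) : ℝ := ∫ s in (0:ℝ)..a, Real.sign (Psi d x y s)

lemma intervalIntegrable_sign (x y : PayStream) (a b : ℝ) :
    IntervalIntegrable (fun s => Real.sign (Psi d x y s)) volume a b := by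
  rw [intervalIntegrable_iff]
  have hfin : volume (Set.uIoc a b) < ⊤ := by
    rw [Set.uIoc_eq_union]
    exact lt_of_le_of_lt (measure_union_le _ _)
      (ENNReal.add_lt_top.2 ⟨measure_Ioc_lt_top, measure_Ioc_lt_top⟩)
  refine Integrable.mono' (g := fun _ => (1:ℝ)) ?_ ?_ ?_
  · exact integrableOn_const hfin.ne
  · exact (measurable_sign.comp (measurable_Psi d x y)).aestronglyMeasurable
  · exact Filter.Eventually.of_forall fun s => sign_abs_le _

lemma phi_zero (x y : PayStream) : phi d x y 0 = 0 :=
  intervalIntegral.integral_same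

lemma phi_lip (x y : PayStream) (a b : ℝ) :
    |phi d x y a - phi d x y b| ≤ |a - b| := by
  have h := intervalIntegral.integral_interval_sub_left
    (intervalIntegrable_sign d x y 0 a) (intervalIntegrable_sign d x y 0 b)
  rw [phi, phi, h]
  have h2 := intervalIntegral.norm_integral_le_of_norm_le_const (C := 1)
    (f := fun s => Real.sign (Psi d x y s)) (a := b) (b := a)
    (fun s _ => by rw [Real.norm_eq_abs]; exact sign_abs_le _)
  rw [Real.norm_eq_abs, one_mul] at h2
  exact h2

lemma phi_eq_integral (x y : PayStream) {a : ℝ} (ha : 0 ≤ a) :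
    phi d x y a
      = ∫ s in Set.Ioi (0:ℝ), (Set.Ioc 0 a).indicator (fun s => Real.sign (Psi d x y s)) s := by
  rw [MeasureTheory.integral_indicator measurableSet_Ioc,
    Measure.restrict_restrict measurableSet_Ioc]
  have h2 : Set.Ioc (0:ℝ) a ∩ Set.Ioi 0 = Set.Ioc 0 a :=
    Set.inter_eq_left.2 (fun s hs => hs.1)
  rw [h2, phi, intervalIntegral.integral_of_le ha]

/-- Abel-summation identity, in integral form: testing the signed measure against the
dual potential gives the CPF integral. -/
lemma sum_phi_eq (hd : IsDiscount d) (x y : PayStream) :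
    ((x.m.sum fun t a => a * phi d x y (d t)) - (y.m.sum fun t a => a * phi d x y (d t)))
      = ICPF d x y := by
  classical
  set T := x.m.support ∪ y.m.support with hT
  have hTnn : ∀ t ∈ T, (0:ℝ) ≤ t := by
    intro t ht
    by_contra h
    push_neg at h
    rcases Finset.mem_union.1 ht with h'|h'
    · exact Finsupp.mem_support_iff.1 h' (x.zero_of_neg t h)
    · exact Finsupp.mem_support_iff.1 h' (y.zero_of_neg t h)
  have hdpos : ∀ t ∈ T, (0:ℝ) ≤ d t := fun t ht => le_of_lt (hd.2 t (hTnn t ht))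
  have hx : (x.m.sum fun t a => a * phi d x y (d t))
      = ∑ t ∈ T, x.m t * phi d x y (d t) := by
    rw [Finsupp.sum]
    exact Finset.sum_subset Finset.subset_union_left
      (fun t _ ht => by rw [Finsupp.notMem_support_iff.1 ht, zero_mul])
  have hy : (y.m.sum fun t a => a * phi d x y (d t))
      = ∑ t ∈ T, y.m t * phi d x y (d t) := by
    rw [Finsupp.sum]
    exact Finset.sum_subset Finset.subset_union_right
      (fun t _ ht => by rw [Finsupp.notMem_support_iff.1 ht, zero_mul])
  rw [hx, hy, ← Finset.sum_sub_distrib]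
  have h1 : ∀ t ∈ T, x.m t * phi d x y (d t) - y.m t * phi d x y (d t)
      = ∫ s in Set.Ioi (0:ℝ),
          (x.m t - y.m t) * (Set.Ioc 0 (d t)).indicator (fun s => Real.sign (Psi d x y s)) s := by
    intro t ht
    rw [integral_const_mul, ← phi_eq_integral d x y (hdpos t ht)]
    ring
  rw [Finset.sum_congr rfl h1, ← integral_finset_sum]
  · refine setIntegral_congr_fun measurableSet_Ioi (fun s _ => ?_)
    have h2 : ∀ t ∈ T, (x.m t - y.m t) * (Set.Ioc 0 (d t)).indicator
          (fun s => Real.sign (Psi d x y s)) s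
        = Real.sign (Psi d x y s) * ((x.m t - y.m t) * (Set.Ioc 0 (d t)).indicator 1 s) := by
      intro t _
      by_cases hs : s ∈ Set.Ioc 0 (d t)
      · rw [Set.indicator_of_mem hs, Set.indicator_of_mem hs, Pi.one_apply]; ring
      · rw [Set.indicator_of_notMem hs, Set.indicator_of_notMem hs]; ring
    rw [Finset.sum_congr rfl h2, ← Finset.mul_sum, ← Psi_eq_sum d (le_of_eq hT.symm) s,
      sign_mul_self]
  · intro t _
    refine Integrable.const_mul ?_ _
    rw [integrable_indicator_iff measurableSet_Ioc]
    refine Integrable.mono' (g := fun _ => (1:ℝ)) ?_ ?_ ?_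
    · exact integrableOn_const (ne_of_lt (lt_of_le_of_lt (Measure.restrict_le_self _)
        measure_Ioc_lt_top))
    · exact (measurable_sign.comp (measurable_Psi d x y)).aestronglyMeasurable
    · exact Filter.Eventually.of_forall fun s => sign_abs_le _

/-- Kantorovich duality: any joint payoff function has transport cost at least `ICPF`. -/
lemma cost_ge_ICPF (hd : IsDiscount d) {x y : PayStream}
    {b : (WithTop ℝ × WithTop ℝ) →₀ ℝ} (hb : IsJointPayoff x y b) :
    ICPF d x y ≤ b.sum fun p v => |v * (dext d p.1 - dext d p.2)| := by
  set g : WithTop ℝ → ℝ := fun j => phi d x y (dext d j) with hg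
  have hgtop : g ⊤ = 0 := phi_zero d x y
  have h1 : (b.sum fun p v => v * (g p.1 - g p.2)) = ICPF d x y := by
    rw [joint_sum_diff hb g hgtop]
    exact sum_phi_eq d hd x y
  have h2 : |b.sum fun p v => v * (g p.1 - g p.2)|
      ≤ b.sum fun p v => |v * (dext d p.1 - dext d p.2)| := by
    rw [Finsupp.sum, Finsupp.sum]
    refine le_trans (Finset.abs_sum_le_sum_abs _ _) (Finset.sum_le_sum fun p _ => ?_)
    rw [abs_mul, abs_mul]
    exact mul_le_mul_of_nonneg_left (phi_lip d x y _ _) (abs_nonneg _)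
  calc ICPF d x y = |ICPF d x y| := (abs_of_nonneg (ICPF_nonneg d x y)).symm
    _ = |b.sum fun p v => v * (g p.1 - g p.2)| := by rw [h1]
    _ ≤ _ := h2

lemma num_eq {x y : PayStream} {b : (WithTop ℝ × WithTop ℝ) →₀ ℝ}
    (hb : IsJointPayoff x y b) (d : ℝ → ℝ) :
    (b.sum fun p v => v * (dext d p.1 - dext d p.2))
      = PayStream.DU d x - PayStream.DU d y := by
  rw [joint_sum_diff hb (dext d) rfl]
  unfold PayStream.DU
  have hx : (x.m.sum fun t a => a * dext d ↑t) = x.m.sum fun t a => d t * a :=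
    Finsupp.sum_congr fun t _ => mul_comm _ _
  have hy : (y.m.sum fun t a => a * dext d ↑t) = y.m.sum fun t a => d t * a :=
    Finsupp.sum_congr fun t _ => mul_comm _ _
  rw [hx, hy]

end CPFAux
namespace CPFAux
open MeasureTheory Set

lemma step_integral (n : ℕ) (u : ℕ → ℝ) (c : ℕ → ℝ) (h : ℝ → ℝ)
    (hun : u n = 0)
    (hmono : ∀ j k : ℕ, j ≤ k → k ≤ n → u k ≤ u j)
    (hstep : ∀ k, k < n → ∀ s, s ∈ Set.Ioc (u (k+1)) (u k) → h s = c k)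
    (htop : ∀ s, u 0 < s → h s = 0)
    (hint : IntegrableOn h (Set.Ioi 0)) :
    ∫ s in Set.Ioi (0:ℝ), |h s| = ∑ k ∈ Finset.range n, |c k| * (u k - u (k+1)) := by
  have hnn : ∀ k, k ≤ n → 0 ≤ u k := fun k hk => hun ▸ hmono k n hk le_rfl
  have h00 : 0 ≤ u 0 := hnn 0 (Nat.zero_le n)
  -- split the domain
  have hsplit : Set.Ioc (0:ℝ) (u 0) ∪ Set.Ioi (u 0) = Set.Ioi 0 :=
    Set.Ioc_union_Ioi_eq_Ioi h00
  have hint1 : IntegrableOn (fun s => |h s|) (Set.Ioc (0:ℝ) (u 0)) :=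
    MeasureTheory.IntegrableOn.mono_set hint.abs (fun s hs => hs.1)
  have hint2 : IntegrableOn (fun s => |h s|) (Set.Ioi (u 0)) :=
    MeasureTheory.IntegrableOn.mono_set hint.abs (Set.Ioi_subset_Ioi h00)
  have hI : ∫ s in Set.Ioi (0:ℝ), |h s|
      = (∫ s in Set.Ioc (0:ℝ) (u 0), |h s|) + ∫ s in Set.Ioi (u 0), |h s| := by
    rw [← hsplit, setIntegral_union (Set.Ioc_disjoint_Ioi le_rfl) measurableSet_Ioi hint1 hint2]
  have hI2 : (∫ s in Set.Ioi (u 0), |h s|) = 0 := by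
    rw [setIntegral_congr_fun measurableSet_Ioi
      (fun s hs => by show |h s| = 0; rw [htop s hs, abs_zero] : Set.EqOn (fun s => |h s|) (fun _ => (0:ℝ)) _)]
    exact integral_zero _ _
  -- interval integrability on each piece
  have hii : ∀ k, k < n → IntervalIntegrable (fun s => |h s|) volume (u k) (u (k+1)) := by
    intro k hk
    rw [intervalIntegrable_iff]
    refine MeasureTheory.IntegrableOn.mono_set hint.abs (fun s hs => ?_)
    have : (0:ℝ) ≤ u k ⊓ u (k+1) :=
      le_inf (hnn k (le_of_lt hk)) (hnn (k+1) hk)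
    exact lt_of_le_of_lt this hs.1
  have hadj := intervalIntegral.sum_integral_adjacent_intervals (a := u) (μ := volume)
    (f := fun s => |h s|) hii
  have hpiece : ∀ k, k < n → (∫ s in (u k)..(u (k+1)), |h s|)
      = -(|c k| * (u k - u (k+1))) := by
    intro k hk
    have hle : u (k+1) ≤ u k := hmono k (k+1) (Nat.le_succ k) hk
    rw [intervalIntegral.integral_symm, intervalIntegral.integral_of_le hle]
    rw [setIntegral_congr_fun measurableSet_Ioc
      (fun s hs => by show |h s| = |c k|; rw [hstep k hk s hs] : Set.EqOn (fun s => |h s|) (fun _ => |c k|) _)]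
    rw [setIntegral_const, smul_eq_mul, Real.volume_real_Ioc_of_le hle,
      mul_comm]
  have hsum : ∑ k ∈ Finset.range n, (∫ s in (u k)..(u (k+1)), |h s|)
      = ∑ k ∈ Finset.range n, -(|c k| * (u k - u (k+1))) :=
    Finset.sum_congr rfl fun k hk => hpiece k (Finset.mem_range.1 hk)
  have hmain : (∫ s in Set.Ioc (0:ℝ) (u 0), |h s|)
      = ∑ k ∈ Finset.range n, |c k| * (u k - u (k+1)) := by
    have h1 : (∫ s in (u 0)..(u n), |h s|) = ∑ k ∈ Finset.range n, -(|c k| * (u k - u (k+1))) := by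
      rw [← hadj, hsum]
    have h2 : (∫ s in Set.Ioc (0:ℝ) (u 0), |h s|) = ∫ s in (u n)..(u 0), |h s| := by
      rw [intervalIntegral.integral_of_le (hun ▸ h00), hun]
    rw [h2, intervalIntegral.integral_symm, h1, ← Finset.sum_neg_distrib]
    exact Finset.sum_congr rfl fun k _ => by ring
  rw [hI, hI2, add_zero, hmain]

end CPFAux
namespace CPFAux
open MeasureTheory Set

lemma dCPF_eq_ICPF (d : ℝ → ℝ) (hd : IsDiscount d) (x y : PayStream) :
    PayStream.dCPF d x y = ICPF d x y := by
  classical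
  set G : Finset ℝ := x.m.support ∪ y.m.support ∪ {0} with hG
  set L : List ℝ := G.sort (· ≤ ·) with hL
  set n : ℕ := L.length with hn
  have hsorted : L.SortedLT := Finset.sortedLT_sort G
  have hmem : ∀ t : ℝ, t ∈ L ↔ t ∈ G := fun t => Finset.mem_sort _
  have hGnn : ∀ t ∈ G, (0:ℝ) ≤ t := by
    intro t ht
    rcases Finset.mem_union.1 ht with ht'|ht'
    · rcases Finset.mem_union.1 ht' with h''|h''
      · by_contra h; push_neg at h
        exact Finsupp.mem_support_iff.1 h'' (x.zero_of_neg t h)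
      · by_contra h; push_neg at h
        exact Finsupp.mem_support_iff.1 h'' (y.zero_of_neg t h)
    · rw [Finset.mem_singleton.1 ht']
  set u : ℕ → ℝ := fun k => if k < n then d (L.getD k 0) else 0 with hu
  set c : ℕ → ℝ := fun k => x.cumul (L.getD k 0) - y.cumul (L.getD k 0) with hc
  have hget : ∀ k (hk : k < n), L.getD k 0 = L.get ⟨k, hk⟩ := by
    intro k hk
    rw [List.getD_eq_getElem L 0 hk]
    rfl
  have hmemG : ∀ k (hk : k < n), L.getD k 0 ∈ G := by
    intro k hk
    rw [hget k hk]
    exact (hmem _).1 (List.get_mem L ⟨k, hk⟩)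
  have hstrictL : ∀ j k (hj : j < n) (hk : k < n), j < k → L.getD j 0 < L.getD k 0 := by
    intro j k hj hk hjk
    rw [hget j hj, hget k hk]
    exact hsorted.strictMono_get (show (⟨j, hj⟩ : Fin n) < ⟨k, hk⟩ from hjk)
  have hdpos : ∀ k (hk : k < n), 0 < d (L.getD k 0) :=
    fun k hk => hd.2 _ (hGnn _ (hmemG k hk))
  have hun : u n = 0 := by rw [hu]; simp
  have hmono : ∀ j k : ℕ, j ≤ k → k ≤ n → u k ≤ u j := by
    intro j k hjk hkn
    rcases eq_or_lt_of_le hjk with rfl|hjk'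
    · exact le_rfl
    rcases lt_or_eq_of_le hkn with hkn'|rfl
    · have hjn : j < n := lt_trans hjk' hkn'
      rw [hu]
      simp only [if_pos hjn, if_pos hkn']
      exact le_of_lt (hd.1 (hGnn _ (hmemG j hjn)) (hGnn _ (hmemG k hkn'))
        (hstrictL j k hjn hkn' hjk'))
    · rw [hun]
      by_cases hjn : j < n
      · rw [hu]; simp only [if_pos hjn]
        exact le_of_lt (hdpos j hjn)
      · rw [hu]; simp only [if_neg hjn]
        exact le_rfl
  have hunn : ∀ k, k ≤ n → 0 ≤ u k := fun k hk => hun ▸ hmono k n hk le_rfl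
  have hcum : ∀ (z : PayStream), z.m.support ⊆ x.m.support ∪ y.m.support → ∀ w : ℝ,
      z.cumul w = ∑ t ∈ G.filter (fun t => t ≤ w), z.m t := by
    intro z hz w
    rw [PayStream.cumul]
    refine Finset.sum_subset (fun t ht' => ?_) (fun t ht1 ht2 => ?_)
    · rw [Finset.mem_filter] at ht' ⊢
      exact ⟨Finset.mem_union_left _ (hz ht'.1), ht'.2⟩
    · by_contra h
      have hts : t ∈ z.m.support := Finsupp.mem_support_iff.2 h
      exact ht2 (Finset.mem_filter.2 ⟨hts, (Finset.mem_filter.1 ht1).2⟩)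
  -- the step property
  have hstep : ∀ k, k < n → ∀ s, s ∈ Set.Ioc (u (k+1)) (u k) → Psi d x y s = c k := by
    intro k hk s hs
    have hs0 : 0 < s := lt_of_le_of_lt (hunn (k+1) hk) hs.1
    have huk : u k = d (L.getD k 0) := by rw [hu]; simp only [if_pos hk]
    rw [Psi_eq_sum d (Finset.subset_union_left) s]
    have hind : ∀ t ∈ G, (x.m t - y.m t) * (Set.Ioc 0 (d t)).indicator 1 s
        = if t ≤ L.getD k 0 then x.m t - y.m t else 0 := by
      intro t ht
      obtain ⟨jf, hjt⟩ := List.mem_iff_get.1 ((hmem t).2 ht)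
      obtain ⟨j, hj⟩ := jf
      have hjt' : L.getD j 0 = t := by rw [hget j hj, hjt]
      by_cases hjk : j ≤ k
      · have htle : t ≤ L.getD k 0 := by
          rcases eq_or_lt_of_le hjk with rfl|h'
          · rw [hjt']
          · exact le_of_lt (hjt' ▸ hstrictL j k hj hk h')
        have hsle : s ≤ d t := by
          have h1 : d (L.getD k 0) ≤ d t := by
            rcases eq_or_lt_of_le hjk with rfl|h'
            · rw [hjt']
            · rw [← hjt']
              exact le_of_lt (hd.1 (hGnn _ (hmemG j hj)) (hGnn _ (hmemG k hk))
                (hstrictL j k hj hk h'))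
          exact le_trans (huk ▸ hs.2) h1
        rw [Set.indicator_of_mem (Set.mem_Ioc.2 ⟨hs0, hsle⟩), if_pos htle, Pi.one_apply, mul_one]
      · push_neg at hjk
        have hkj : L.getD k 0 < t := hjt' ▸ hstrictL k j hk hj hjk
        have hdt : d t ≤ u (k+1) := by
          have h2 := hmono (k+1) j hjk (le_of_lt hj)
          have hdj : u j = d t := by rw [hu]; simp only [if_pos (show j < n from hj)]; rw [hjt']
          exact hdj ▸ h2
        have hns : ¬ s ≤ d t := not_le.2 (lt_of_le_of_lt hdt hs.1)
        rw [Set.indicator_of_notMem (fun hmem' => hns hmem'.2), if_neg (not_le.2 hkj),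
          mul_zero]
    rw [Finset.sum_congr rfl hind, Finset.sum_ite, Finset.sum_const_zero, add_zero]
    show _ = x.cumul (L.getD k 0) - y.cumul (L.getD k 0)
    rw [hcum x Finset.subset_union_left _, hcum y Finset.subset_union_right _,
      ← Finset.sum_sub_distrib]
  have htop : ∀ s, u 0 < s → Psi d x y s = 0 := by
    intro s hs
    rw [Psi]
    refine Finset.sum_eq_zero (fun t ht => ?_)
    obtain ⟨jf, hjt⟩ := List.mem_iff_get.1 ((hmem t).2 (Finset.mem_union_left _ ht))
    obtain ⟨j, hj⟩ := jf
    have hjt' : L.getD j 0 = t := by rw [hget j hj, hjt]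
    have hdt : d t ≤ u 0 := by
      have h2 := hmono 0 j (Nat.zero_le j) (le_of_lt hj)
      have hdj : u j = d t := by rw [hu]; simp only [if_pos (show j < n from hj)]; rw [hjt']
      exact hdj ▸ h2
    have hns : ¬ s ≤ d t := not_le.2 (lt_of_le_of_lt hdt hs)
    rw [Set.indicator_of_notMem (fun hmem' => hns hmem'.2), mul_zero]
  have key := step_integral n u c (Psi d x y) hun hmono hstep htop (integrableOn_Psi d x y)
  rw [ICPF, key]
  show (∑ k ∈ Finset.range L.length,
      |x.cumul (L.getD k 0) - y.cumul (L.getD k 0)| *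
        (d (L.getD k 0) - if k + 1 < L.length then d (L.getD (k + 1) 0) else 0))
    = ∑ k ∈ Finset.range n, |c k| * (u k - u (k+1))
  refine Finset.sum_congr rfl (fun k hk => ?_)
  have hk' : k < n := Finset.mem_range.1 hk
  show _ = |x.cumul (L.getD k 0) - y.cumul (L.getD k 0)| * (u k - u (k+1))
  have huk : u k = d (L.getD k 0) := by rw [hu]; simp only [if_pos hk']
  have huk1 : u (k+1) = if k + 1 < L.length then d (L.getD (k + 1) 0) else 0 := by rw [hu]
  rw [huk, huk1]

end CPFAux
namespace CPFAux
open MeasureTheory Set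

lemma ind_diff {a b : ℝ} (h0 : 0 ≤ a) (hab : a ≤ b) (s : ℝ) :
    (Set.Ioc 0 b).indicator (1 : ℝ → ℝ) s - (Set.Ioc 0 a).indicator 1 s
      = (Set.Ioc a b).indicator 1 s := by
  rcases le_or_gt s 0 with h1|h1
  · rw [Set.indicator_of_notMem (fun hc => absurd hc.1 (not_lt.2 h1)),
      Set.indicator_of_notMem (fun hc => absurd hc.1 (not_lt.2 h1)),
      Set.indicator_of_notMem (fun hc : s ∈ Set.Ioc a b => by
        have := hc.1; linarith)]
    ring
  · rcases le_or_gt s a with h2|h2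
    · rw [Set.indicator_of_mem (Set.mem_Ioc.2 ⟨h1, le_trans h2 hab⟩),
        Set.indicator_of_mem (Set.mem_Ioc.2 ⟨h1, h2⟩),
        Set.indicator_of_notMem (fun hc : s ∈ Set.Ioc a b => by
          have := hc.1; linarith)]
      ring
    · rcases le_or_gt s b with h3|h3
      · rw [Set.indicator_of_mem (Set.mem_Ioc.2 ⟨h1, h3⟩),
          Set.indicator_of_notMem (fun hc : s ∈ Set.Ioc 0 a => by
            have := hc.2; linarith),
          Set.indicator_of_mem (Set.mem_Ioc.2 ⟨h2, h3⟩)]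
        ring
      · rw [Set.indicator_of_notMem (fun hc : s ∈ Set.Ioc 0 b => by
            have := hc.2; linarith),
          Set.indicator_of_notMem (fun hc : s ∈ Set.Ioc 0 a => by
            have := hc.2; linarith),
          Set.indicator_of_notMem (fun hc : s ∈ Set.Ioc a b => by
            have := hc.2; linarith)]
        ring

lemma supp_nonneg (x : PayStream) {t : ℝ} (ht : t ∈ x.m.support) : 0 ≤ t := by
  by_contra h
  push_neg at h
  exact Finsupp.mem_support_iff.1 ht (x.zero_of_neg t h)

/-- Key decrement step: shaving mass `m` off the earliest atoms decreases the CPF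
integral by at least the transport cost. -/
lemma ICPF_dec (d : ℝ → ℝ) (hd : IsDiscount d) (x y x' y' : PayStream)
    (hx : ∀ t, 0 ≤ x.m t) (hy : ∀ t, 0 ≤ y.m t)
    {τx τy : ℝ} (hτx : τx ∈ x.m.support) (hτy : τy ∈ y.m.support)
    (hminy : ∀ t ∈ y.m.support, τy ≤ t)
    (hττ : τx ≤ τy)
    {m : ℝ} (hm0 : 0 < m) (hmx : m ≤ x.m τx)
    (hx' : x'.m = x.m - Finsupp.single τx m) (hy' : y'.m = y.m - Finsupp.single τy m) :
    ICPF d x' y' + m * (d τx - d τy) ≤ ICPF d x y := by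
  classical
  have hτx0 : (0:ℝ) ≤ τx := supp_nonneg x hτx
  have hτy0 : (0:ℝ) ≤ τy := supp_nonneg y hτy
  have hdyx : d τy ≤ d τx := hd.1.antitoneOn hτx0 hτy0 hττ
  have hdy0 : 0 < d τy := hd.2 τy hτy0
  set T := x.m.support ∪ y.m.support with hT
  have hτxT : τx ∈ T := Finset.mem_union_left _ hτx
  have hτyT : τy ∈ T := Finset.mem_union_right _ hτy
  have hsubx : x'.m.support ⊆ x.m.support := by
    intro t ht
    rcases eq_or_ne t τx with rfl|hne
    · exact hτx
    · refine Finsupp.mem_support_iff.2 ?_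
      have := Finsupp.mem_support_iff.1 ht
      rwa [hx', Finsupp.sub_apply, Finsupp.single_eq_of_ne' (Ne.symm hne), sub_zero] at this
  have hsuby : y'.m.support ⊆ y.m.support := by
    intro t ht
    rcases eq_or_ne t τy with rfl|hne
    · exact hτy
    · refine Finsupp.mem_support_iff.2 ?_
      have := Finsupp.mem_support_iff.1 ht
      rwa [hy', Finsupp.sub_apply, Finsupp.single_eq_of_ne' (Ne.symm hne), sub_zero] at this
  have hsub' : x'.m.support ∪ y'.m.support ⊆ T :=
    Finset.union_subset (le_trans hsubx Finset.subset_union_left)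
      (le_trans hsuby Finset.subset_union_right)
  -- the pointwise decomposition
  have key1 : ∀ s, Psi d x y s
      = Psi d x' y' s + m * (Set.Ioc (d τy) (d τx)).indicator 1 s := by
    intro s
    rw [Psi_eq_sum d hsub' s, Psi_eq_sum d (le_of_eq hT.symm) s]
    have hterm : ∀ t ∈ T, (x'.m t - y'.m t) * (Set.Ioc 0 (d t)).indicator 1 s
        = (x.m t - y.m t) * (Set.Ioc 0 (d t)).indicator 1 s
          - (Finsupp.single τx m t * (Set.Ioc 0 (d t)).indicator 1 s
            - Finsupp.single τy m t * (Set.Ioc 0 (d t)).indicator 1 s) := by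
      intro t _
      rw [hx', hy', Finsupp.sub_apply, Finsupp.sub_apply]
      ring
    rw [Finset.sum_congr rfl hterm, Finset.sum_sub_distrib, Finset.sum_sub_distrib]
    have hsx : ∑ t ∈ T, Finsupp.single τx m t * (Set.Ioc 0 (d t)).indicator 1 s
        = m * (Set.Ioc 0 (d τx)).indicator 1 s := by
      rw [Finset.sum_eq_single τx]
      · rw [Finsupp.single_eq_same]
      · intro t _ hne
        rw [Finsupp.single_eq_of_ne' (Ne.symm hne), zero_mul]
      · intro habs
        exact absurd hτxT habs
    have hsy : ∑ t ∈ T, Finsupp.single τy m t * (Set.Ioc 0 (d t)).indicator 1 s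
        = m * (Set.Ioc 0 (d τy)).indicator 1 s := by
      rw [Finset.sum_eq_single τy]
      · rw [Finsupp.single_eq_same]
      · intro t _ hne
        rw [Finsupp.single_eq_of_ne' (Ne.symm hne), zero_mul]
      · intro habs
        exact absurd hτyT habs
    rw [hsx, hsy, ← mul_sub, ind_diff (le_of_lt hdy0) hdyx]
    ring
  have key2 : ∀ s ∈ Set.Ioc (d τy) (d τx), m ≤ Psi d x y s := by
    intro s hs
    have hs0 : 0 < s := lt_trans hdy0 hs.1
    rw [Psi_eq_sum d (le_of_eq hT.symm) s]
    have hsplit : ∀ t ∈ T, (x.m t - y.m t) * (Set.Ioc 0 (d t)).indicator 1 s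
        = x.m t * (Set.Ioc 0 (d t)).indicator 1 s - y.m t * (Set.Ioc 0 (d t)).indicator 1 s := by
      intro t _; ring
    rw [Finset.sum_congr rfl hsplit, Finset.sum_sub_distrib]
    have hzero : ∑ t ∈ T, y.m t * (Set.Ioc 0 (d t)).indicator 1 s = 0 := by
      refine Finset.sum_eq_zero (fun t ht => ?_)
      by_cases hty : t ∈ y.m.support
      · have ht0 : (0:ℝ) ≤ t := supp_nonneg y hty
        have : d t ≤ d τy := hd.1.antitoneOn hτy0 ht0 (hminy t hty)
        rw [Set.indicator_of_notMem (fun hc : s ∈ Set.Ioc 0 (d t) => by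
          have := hc.2; have := hs.1; linarith), mul_zero]
      · rw [Finsupp.notMem_support_iff.1 hty, zero_mul]
    rw [hzero, sub_zero]
    have hτterm : m ≤ x.m τx * (Set.Ioc 0 (d τx)).indicator 1 s := by
      rw [Set.indicator_of_mem (Set.mem_Ioc.2 ⟨hs0, hs.2⟩), Pi.one_apply, mul_one]
      exact hmx
    refine le_trans hτterm (Finset.single_le_sum (f := fun t =>
      x.m t * (Set.Ioc 0 (d t)).indicator 1 s) (fun t _ => ?_) hτxT)
    exact mul_nonneg (hx t) (Set.indicator_nonneg (fun _ _ => zero_le_one) s)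
  -- pointwise absolute-value inequality
  have hpt : ∀ s, |Psi d x' y' s| + m * (Set.Ioc (d τy) (d τx)).indicator 1 s
      ≤ |Psi d x y s| := by
    intro s
    by_cases hs : s ∈ Set.Ioc (d τy) (d τx)
    · rw [Set.indicator_of_mem hs, Pi.one_apply, mul_one]
      have h1 := key1 s
      rw [Set.indicator_of_mem hs, Pi.one_apply, mul_one] at h1
      have h2 := key2 s hs
      have h3 : 0 ≤ Psi d x' y' s := by linarith
      rw [abs_of_nonneg h3, abs_of_nonneg (by linarith : (0:ℝ) ≤ Psi d x y s)]
      linarith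
    · rw [Set.indicator_of_notMem hs, mul_zero, add_zero]
      have h1 := key1 s
      rw [Set.indicator_of_notMem hs, mul_zero, add_zero] at h1
      rw [h1]
  -- integrate
  have hi1 : IntegrableOn (fun s => |Psi d x' y' s|
      + m * (Set.Ioc (d τy) (d τx)).indicator 1 s) (Set.Ioi 0) :=
    ((integrableOn_Psi d x' y').abs).add (integrable_ind _ _ m _)
  have hint : ∫ s in Set.Ioi (0:ℝ),
      (|Psi d x' y' s| + m * (Set.Ioc (d τy) (d τx)).indicator 1 s)
      ≤ ∫ s in Set.Ioi (0:ℝ), |Psi d x y s| :=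
    integral_mono hi1 (integrableOn_Psi d x y).abs hpt
  rw [integral_add (integrableOn_Psi d x' y').abs (integrable_ind _ _ m _),
    integral_const_mul, integral_ind (le_of_lt hdy0) hdyx] at hint
  exact hint

def injR : ℝ ↪ WithTop ℝ × WithTop ℝ :=
  ⟨fun t => ((t : WithTop ℝ), ⊤), fun a b h => WithTop.coe_injective (congrArg Prod.fst h)⟩

def injL : ℝ ↪ WithTop ℝ × WithTop ℝ :=
  ⟨fun t => (⊤, (t : WithTop ℝ)), fun a b h => WithTop.coe_injective (congrArg Prod.snd h)⟩

lemma coupling_x_only (d : ℝ → ℝ) (hd : IsDiscount d) (x y : PayStream)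
    (hx : ∀ t, 0 ≤ x.m t) (hy0 : y.m = 0) :
    ∃ b : (WithTop ℝ × WithTop ℝ) →₀ ℝ, IsJointPayoff x y b ∧
      (b.sum fun p v => |v * (dext d p.1 - dext d p.2)|) ≤ ICPF d x y := by
  classical
  refine ⟨x.m.embDomain injR, ⟨?_, ?_, ?_⟩, ?_⟩
  · refine Finsupp.embDomain_notin_range _ _ _ (fun hc => ?_)
    obtain ⟨t, ht⟩ := hc
    exact WithTop.coe_ne_top (congrArg Prod.fst ht)
  · intro t
    rw [Finsupp.sum_embDomain]
    have : (x.m.sum fun s v => if (injR s).1 = (t : WithTop ℝ) then v else 0)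
        = x.m.sum fun s v => if s = t then v else 0 := by
      refine Finsupp.sum_congr (fun s _ => ?_)
      show (if ((s : WithTop ℝ)) = (t : WithTop ℝ) then x.m s else 0) = _
      simp only [WithTop.coe_eq_coe]
    rw [this, Finsupp.sum]
    rw [Finset.sum_ite_eq' x.m.support t (fun s => x.m s)]
    by_cases ht : t ∈ x.m.support
    · rw [if_pos ht]
    · rw [if_neg ht, Finsupp.notMem_support_iff.1 ht]
  · intro t
    rw [Finsupp.sum_embDomain]
    have : (x.m.sum fun s v => if (injR s).2 = (t : WithTop ℝ) then v else 0)
        = x.m.sum fun _ _ => (0:ℝ) := by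
      refine Finsupp.sum_congr (fun s _ => ?_)
      rw [if_neg]
      exact fun hc => WithTop.coe_ne_top (id hc.symm)
    rw [this, hy0]
    simp [Finsupp.sum]
  · rw [Finsupp.sum_embDomain]
    have hc : (x.m.sum fun t v => |v * (dext d (injR t).1 - dext d (injR t).2)|)
        = x.m.sum fun t v => v * d t := by
      refine Finsupp.sum_congr (fun t ht => ?_)
      show |x.m t * (d t - 0)| = x.m t * d t
      rw [sub_zero, abs_mul, abs_of_nonneg (hx t),
        abs_of_pos (hd.2 t (supp_nonneg x ht))]
    rw [hc]
    -- ICPF is at least the total discounted mass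
    have hPsi : ∀ s : ℝ, Psi d x y s
        = ∑ t ∈ x.m.support, x.m t * (Set.Ioc 0 (d t)).indicator 1 s := by
      intro s
      rw [Psi]
      have h1 : x.m.support ∪ y.m.support = x.m.support := by
        rw [hy0]; simp
      rw [h1]
      refine Finset.sum_congr rfl (fun t _ => ?_)
      rw [hy0]
      simp
    have hle : ∀ s : ℝ, Psi d x y s ≤ |Psi d x y s| := fun s => le_abs_self _
    have h2 : (∫ s in Set.Ioi (0:ℝ), Psi d x y s) ≤ ICPF d x y :=
      integral_mono (integrableOn_Psi d x y) (integrableOn_Psi d x y).abs hle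
    refine le_trans (le_of_eq ?_) h2
    have h3 : (∫ s in Set.Ioi (0:ℝ), Psi d x y s)
        = ∑ t ∈ x.m.support, x.m t * d t := by
      rw [setIntegral_congr_fun measurableSet_Ioi
        (fun s _ => hPsi s : Set.EqOn (Psi d x y)
          (fun s => ∑ t ∈ x.m.support, x.m t * (Set.Ioc 0 (d t)).indicator 1 s) _)]
      rw [integral_finset_sum _ (fun t _ => integrable_ind _ _ _ _)]
      refine Finset.sum_congr rfl (fun t ht => ?_)
      rw [integral_const_mul, integral_ind le_rfl (le_of_lt (hd.2 t (supp_nonneg x ht)))]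
      ring
    rw [h3, Finsupp.sum]

lemma coupling_y_only (d : ℝ → ℝ) (hd : IsDiscount d) (x y : PayStream)
    (hy : ∀ t, 0 ≤ y.m t) (hx0 : x.m = 0) :
    ∃ b : (WithTop ℝ × WithTop ℝ) →₀ ℝ, IsJointPayoff x y b ∧
      (b.sum fun p v => |v * (dext d p.1 - dext d p.2)|) ≤ ICPF d x y := by
  classical
  refine ⟨y.m.embDomain injL, ⟨?_, ?_, ?_⟩, ?_⟩
  · refine Finsupp.embDomain_notin_range _ _ _ (fun hc => ?_)
    obtain ⟨t, ht⟩ := hc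
    exact WithTop.coe_ne_top (congrArg Prod.snd ht)
  · intro t
    rw [Finsupp.sum_embDomain]
    have : (y.m.sum fun s v => if (injL s).1 = (t : WithTop ℝ) then v else 0)
        = y.m.sum fun _ _ => (0:ℝ) := by
      refine Finsupp.sum_congr (fun s _ => ?_)
      rw [if_neg]
      exact fun hc => WithTop.coe_ne_top (id hc.symm)
    rw [this, hx0]
    simp [Finsupp.sum]
  · intro t
    rw [Finsupp.sum_embDomain]
    have : (y.m.sum fun s v => if (injL s).2 = (t : WithTop ℝ) then v else 0)
        = y.m.sum fun s v => if s = t then v else 0 := by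
      refine Finsupp.sum_congr (fun s _ => ?_)
      show (if ((s : WithTop ℝ)) = (t : WithTop ℝ) then y.m s else 0) = _
      simp only [WithTop.coe_eq_coe]
    rw [this, Finsupp.sum]
    rw [Finset.sum_ite_eq' y.m.support t (fun s => y.m s)]
    by_cases ht : t ∈ y.m.support
    · rw [if_pos ht]
    · rw [if_neg ht, Finsupp.notMem_support_iff.1 ht]
  · rw [Finsupp.sum_embDomain]
    have hc : (y.m.sum fun t v => |v * (dext d (injL t).1 - dext d (injL t).2)|)
        = y.m.sum fun t v => v * d t := by
      refine Finsupp.sum_congr (fun t ht => ?_)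
      show |y.m t * ((0:ℝ) - d t)| = y.m t * d t
      rw [zero_sub, abs_mul, abs_neg, abs_of_nonneg (hy t),
        abs_of_pos (hd.2 t (supp_nonneg y ht))]
    rw [hc]
    have hPsi : ∀ s : ℝ, -Psi d x y s
        = ∑ t ∈ y.m.support, y.m t * (Set.Ioc 0 (d t)).indicator 1 s := by
      intro s
      rw [Psi]
      have h1 : x.m.support ∪ y.m.support = y.m.support := by
        rw [hx0]; simp
      rw [h1, ← Finset.sum_neg_distrib]
      refine Finset.sum_congr rfl (fun t _ => ?_)
      rw [hx0]
      simp
    have hle : ∀ s : ℝ, -Psi d x y s ≤ |Psi d x y s| := fun s => neg_le_abs _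
    have h2 : (∫ s in Set.Ioi (0:ℝ), -Psi d x y s) ≤ ICPF d x y :=
      integral_mono (integrableOn_Psi d x y).neg (integrableOn_Psi d x y).abs hle
    refine le_trans (le_of_eq ?_) h2
    have h3 : (∫ s in Set.Ioi (0:ℝ), -Psi d x y s)
        = ∑ t ∈ y.m.support, y.m t * d t := by
      rw [setIntegral_congr_fun measurableSet_Ioi
        (fun s _ => hPsi s : Set.EqOn (fun s => -Psi d x y s)
          (fun s => ∑ t ∈ y.m.support, y.m t * (Set.Ioc 0 (d t)).indicator 1 s) _)]
      rw [integral_finset_sum _ (fun t _ => integrable_ind _ _ _ _)]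
      refine Finset.sum_congr rfl (fun t ht => ?_)
      rw [integral_const_mul, integral_ind le_rfl (le_of_lt (hd.2 t (supp_nonneg y ht)))]
      ring
    rw [h3, Finsupp.sum]

end CPFAux
namespace CPFAux
open MeasureTheory Set

lemma exists_coupling (d : ℝ → ℝ) (hd : IsDiscount d) :
    ∀ N : ℕ, ∀ x y : PayStream, (∀ t, 0 ≤ x.m t) → (∀ t, 0 ≤ y.m t) →
      x.m.support.card + y.m.support.card ≤ N →
      ∃ b : (WithTop ℝ × WithTop ℝ) →₀ ℝ, IsJointPayoff x y b ∧
        (b.sum fun p v => |v * (dext d p.1 - dext d p.2)|) ≤ ICPF d x y := by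
  intro N
  induction N with
  | zero =>
    intro x y hx hy hcard
    have hy0 : y.m = 0 := by
      have : y.m.support.card = 0 := by omega
      exact Finsupp.support_eq_empty.1 (Finset.card_eq_zero.1 this)
    exact coupling_x_only d hd x y hx hy0
  | succ N ih =>
    intro x y hx hy hcard
    by_cases hy0 : y.m = 0
    · exact coupling_x_only d hd x y hx hy0
    by_cases hx0 : x.m = 0
    · exact coupling_y_only d hd x y hy hx0
    classical
    have hxE : x.m.support.Nonempty := Finsupp.support_nonempty_iff.2 hx0
    have hyE : y.m.support.Nonempty := Finsupp.support_nonempty_iff.2 hy0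
    set τx := x.m.support.min' hxE with hτxdef
    set τy := y.m.support.min' hyE with hτydef
    have hτx : τx ∈ x.m.support := Finset.min'_mem _ _
    have hτy : τy ∈ y.m.support := Finset.min'_mem _ _
    have hminx : ∀ t ∈ x.m.support, τx ≤ t := fun t ht => Finset.min'_le _ t ht
    have hminy : ∀ t ∈ y.m.support, τy ≤ t := fun t ht => Finset.min'_le _ t ht
    have hτx0 : (0:ℝ) ≤ τx := supp_nonneg x hτx
    have hτy0 : (0:ℝ) ≤ τy := supp_nonneg y hτy
    set m := min (x.m τx) (y.m τy) with hmdef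
    have hxτpos : 0 < x.m τx := lt_of_le_of_ne (hx τx) (Ne.symm (Finsupp.mem_support_iff.1 hτx))
    have hyτpos : 0 < y.m τy := lt_of_le_of_ne (hy τy) (Ne.symm (Finsupp.mem_support_iff.1 hτy))
    have hm0 : 0 < m := lt_min hxτpos hyτpos
    have hmx : m ≤ x.m τx := min_le_left _ _
    have hmy : m ≤ y.m τy := min_le_right _ _
    -- the reduced streams
    set x' : PayStream := ⟨x.m - Finsupp.single τx m, by
      intro t ht
      rw [Finsupp.sub_apply, x.zero_of_neg t ht,
        Finsupp.single_eq_of_ne' (by intro h; rw [h] at hτx0; exact absurd ht (not_lt.2 hτx0)),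
        sub_zero]⟩ with hx'def
    set y' : PayStream := ⟨y.m - Finsupp.single τy m, by
      intro t ht
      rw [Finsupp.sub_apply, y.zero_of_neg t ht,
        Finsupp.single_eq_of_ne' (by intro h; rw [h] at hτy0; exact absurd ht (not_lt.2 hτy0)),
        sub_zero]⟩ with hy'def
    have hx'm : x'.m = x.m - Finsupp.single τx m := rfl
    have hy'm : y'.m = y.m - Finsupp.single τy m := rfl
    have hx'app : ∀ t, x'.m t = x.m t - (if τx = t then m else 0) := by
      intro t; rw [hx'm, Finsupp.sub_apply, Finsupp.single_apply]
    have hy'app : ∀ t, y'.m t = y.m t - (if τy = t then m else 0) := by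
      intro t; rw [hy'm, Finsupp.sub_apply, Finsupp.single_apply]
    have hx'nn : ∀ t, 0 ≤ x'.m t := by
      intro t
      rw [hx'app]
      by_cases h : τx = t
      · rw [if_pos h, ← h]; linarith
      · rw [if_neg h, sub_zero]; exact hx t
    have hy'nn : ∀ t, 0 ≤ y'.m t := by
      intro t
      rw [hy'app]
      by_cases h : τy = t
      · rw [if_pos h, ← h]; linarith
      · rw [if_neg h, sub_zero]; exact hy t
    have hsubx : x'.m.support ⊆ x.m.support := by
      intro t ht
      have h1 := Finsupp.mem_support_iff.1 ht
      rcases eq_or_ne t τx with rfl|hne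
      · exact hτx
      · refine Finsupp.mem_support_iff.2 ?_
        rw [hx'app, if_neg (Ne.symm hne), sub_zero] at h1
        exact h1
    have hsuby : y'.m.support ⊆ y.m.support := by
      intro t ht
      have h1 := Finsupp.mem_support_iff.1 ht
      rcases eq_or_ne t τy with rfl|hne
      · exact hτy
      · refine Finsupp.mem_support_iff.2 ?_
        rw [hy'app, if_neg (Ne.symm hne), sub_zero] at h1
        exact h1
    -- the cardinality drops
    have hcard' : x'.m.support.card + y'.m.support.card ≤ N := by
      have hcx : x'.m.support.card ≤ x.m.support.card := Finset.card_le_card hsubx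
      have hcy : y'.m.support.card ≤ y.m.support.card := Finset.card_le_card hsuby
      have hx1 : 1 ≤ x.m.support.card := Finset.card_pos.2 hxE
      have hy1 : 1 ≤ y.m.support.card := Finset.card_pos.2 hyE
      rcases min_choice (x.m τx) (y.m τy) with hch|hch
      · have hτout : τx ∉ x'.m.support := by
          refine Finsupp.notMem_support_iff.2 ?_
          rw [hx'app, if_pos rfl, hmdef, hch]; ring
        have : x'.m.support ⊆ x.m.support.erase τx :=
          fun t ht => Finset.mem_erase.2 ⟨fun h => hτout (h ▸ ht), hsubx ht⟩
        have hcx' : x'.m.support.card ≤ x.m.support.card - 1 := by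
          refine le_trans (Finset.card_le_card this) ?_
          rw [Finset.card_erase_of_mem hτx]
        omega
      · have hτout : τy ∉ y'.m.support := by
          refine Finsupp.notMem_support_iff.2 ?_
          rw [hy'app, if_pos rfl, hmdef, hch]; ring
        have : y'.m.support ⊆ y.m.support.erase τy :=
          fun t ht => Finset.mem_erase.2 ⟨fun h => hτout (h ▸ ht), hsuby ht⟩
        have hcy' : y'.m.support.card ≤ y.m.support.card - 1 := by
          refine le_trans (Finset.card_le_card this) ?_
          rw [Finset.card_erase_of_mem hτy]
        omega
    obtain ⟨b', hb', hcost'⟩ := ih x' y' hx'nn hy'nn hcard'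
    set P : WithTop ℝ × WithTop ℝ := ((τx : WithTop ℝ), (τy : WithTop ℝ)) with hP
    set b : (WithTop ℝ × WithTop ℝ) →₀ ℝ := b' + Finsupp.single P m with hb
    have hPne : P ≠ ((⊤ : WithTop ℝ), (⊤ : WithTop ℝ)) := by
      intro h
      exact WithTop.coe_ne_top (congrArg Prod.fst h)
    refine ⟨b, ⟨?_, ?_, ?_⟩, ?_⟩
    · rw [hb, Finsupp.add_apply, hb'.1, Finsupp.single_apply, if_neg hPne, add_zero]
    · intro t
      have hzero : ∀ p : WithTop ℝ × WithTop ℝ,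
          (if p.1 = (t : WithTop ℝ) then (0:ℝ) else 0) = 0 := fun p => ite_self 0
      have haddf : ∀ (p : WithTop ℝ × WithTop ℝ) (v w : ℝ),
          (if p.1 = (t : WithTop ℝ) then v + w else 0)
            = (if p.1 = (t : WithTop ℝ) then v else 0)
              + (if p.1 = (t : WithTop ℝ) then w else 0) := by
        intro p v w; split_ifs <;> simp
      have key := Finsupp.sum_add_index' (f := b') (g := Finsupp.single P m)
        (h := fun (p : WithTop ℝ × WithTop ℝ) (v : ℝ) => if p.1 = (t : WithTop ℝ) then v else 0)
        hzero haddf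
      have key2 := Finsupp.sum_single_index (a := P) (b := m)
        (h := fun (p : WithTop ℝ × WithTop ℝ) (v : ℝ) => if p.1 = (t : WithTop ℝ) then v else 0)
        (hzero P)
      rw [hb, key, hb'.2.1 t, key2]
      rw [hx'app t]
      show x.m t - (if τx = t then m else 0) + (if (τx : WithTop ℝ) = (t : WithTop ℝ) then m else 0) = x.m t
      by_cases h : τx = t
      · rw [if_pos h, if_pos (by rw [h])]; ring
      · rw [if_neg h, if_neg (fun hc => h (WithTop.coe_injective hc))]; ring
    · intro t
      have hzero : ∀ p : WithTop ℝ × WithTop ℝ,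
          (if p.2 = (t : WithTop ℝ) then (0:ℝ) else 0) = 0 := fun p => ite_self 0
      have haddf : ∀ (p : WithTop ℝ × WithTop ℝ) (v w : ℝ),
          (if p.2 = (t : WithTop ℝ) then v + w else 0)
            = (if p.2 = (t : WithTop ℝ) then v else 0)
              + (if p.2 = (t : WithTop ℝ) then w else 0) := by
        intro p v w; split_ifs <;> simp
      have key := Finsupp.sum_add_index' (f := b') (g := Finsupp.single P m)
        (h := fun (p : WithTop ℝ × WithTop ℝ) (v : ℝ) => if p.2 = (t : WithTop ℝ) then v else 0)
        hzero haddf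
      have key2 := Finsupp.sum_single_index (a := P) (b := m)
        (h := fun (p : WithTop ℝ × WithTop ℝ) (v : ℝ) => if p.2 = (t : WithTop ℝ) then v else 0)
        (hzero P)
      rw [hb, key, hb'.2.2 t, key2]
      rw [hy'app t]
      show y.m t - (if τy = t then m else 0) + (if (τy : WithTop ℝ) = (t : WithTop ℝ) then m else 0) = y.m t
      by_cases h : τy = t
      · rw [if_pos h, if_pos (by rw [h])]; ring
      · rw [if_neg h, if_neg (fun hc => h (WithTop.coe_injective hc))]; ring
    · -- the cost bound
      set Δ : WithTop ℝ × WithTop ℝ → ℝ := fun p => dext d p.1 - dext d p.2 with hΔ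
      set S : Finset (WithTop ℝ × WithTop ℝ) := b'.support ∪ (Finsupp.single P m).support
        with hS
      have hsupb : b.support ⊆ S := Finsupp.support_add
      have habs0 : ∀ p : WithTop ℝ × WithTop ℝ, |(0:ℝ) * Δ p| = 0 := by
        intro p; rw [zero_mul, abs_zero]
      have hcostb : (b.sum fun p v => |v * Δ p|) = ∑ p ∈ S, |b p * Δ p| :=
        Finsupp.sum_of_support_subset b hsupb _ (fun p _ => habs0 p)
      have hcb' : (b'.sum fun p v => |v * Δ p|) = ∑ p ∈ S, |b' p * Δ p| :=
        Finsupp.sum_of_support_subset b' Finset.subset_union_left _ (fun p _ => habs0 p)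
      have hcs : ((Finsupp.single P m).sum fun p v => |v * Δ p|)
          = ∑ p ∈ S, |Finsupp.single P m p * Δ p| :=
        Finsupp.sum_of_support_subset _ Finset.subset_union_right _ (fun p _ => habs0 p)
      have hsingle : ((Finsupp.single P m).sum fun p v => |v * Δ p|) = |m * Δ P| :=
        Finsupp.sum_single_index (habs0 P)
      have htri : (b.sum fun p v => |v * Δ p|)
          ≤ (b'.sum fun p v => |v * Δ p|) + |m * Δ P| := by
        rw [hcostb, hcb', ← hsingle, hcs, ← Finset.sum_add_distrib]
        refine Finset.sum_le_sum (fun p _ => ?_)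
        rw [hb, Finsupp.add_apply, add_mul]
        exact abs_add_le _ _
      -- now use the decrement lemma, in two symmetric cases
      have hdec : ICPF d x' y' + |m * Δ P| ≤ ICPF d x y := by
        have hΔP : Δ P = d τx - d τy := rfl
        rcases le_total τx τy with hle|hle
        · have h1 := ICPF_dec d hd x y x' y' hx hy hτx hτy hminy hle hm0 hmx hx'm hy'm
          have h2 : |m * Δ P| = m * (d τx - d τy) := by
            rw [hΔP, abs_mul, abs_of_pos hm0, abs_of_nonneg
              (sub_nonneg.2 (hd.1.antitoneOn hτx0 hτy0 hle))]
          rw [h2]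
          exact h1
        · have h1 := ICPF_dec d hd y x y' x' hy hx hτy hτx hminx hle hm0 hmy hy'm hx'm
          have h2 : |m * Δ P| = m * (d τy - d τx) := by
            rw [hΔP, abs_mul, abs_of_pos hm0, abs_sub_comm, abs_of_nonneg
              (sub_nonneg.2 (hd.1.antitoneOn hτy0 hτx0 hle))]
          rw [h2, ← ICPF_symm d x' y', ← ICPF_symm d x y]
          exact h1
      calc (b.sum fun p v => |v * Δ p|)
          ≤ (b'.sum fun p v => |v * Δ p|) + |m * Δ P| := htri
        _ ≤ ICPF d x' y' + |m * Δ P| := by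
            have := hcost'
            rw [hΔ]
            exact add_le_add hcost' le_rfl
        _ ≤ ICPF d x y := hdec

end CPFAux

/-- Proposition 8 — for positively-valued payoff streams, the maximal
L1 ease of comparison over joint payoff functions is attained and equals the
generalized CPF-complexity value. -/
theorem stmt_10 (x y : PayStream) (hxy : x ≠ y)
    (hx : ∀ t, 0 ≤ x.m t) (hy : ∀ t, 0 ≤ y.m t)
    (d : ℝ → ℝ) (hd : IsDiscount d)
    (H : ℝ → ℝ) (hHc : ContinuousOn H (Set.Icc 0 1))
    (hHm : StrictMonoOn H (Set.Icc 0 1)) (hH0 : H 0 = 0) :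
    ∃ b : (WithTop ℝ × WithTop ℝ) →₀ ℝ, IsJointPayoff x y b ∧
      jointVal H d b =
        H (|PayStream.DU d x - PayStream.DU d y| / PayStream.dCPF d x y) ∧
      ∀ b' : (WithTop ℝ × WithTop ℝ) →₀ ℝ, IsJointPayoff x y b' →
        jointVal H d b' ≤
          H (|PayStream.DU d x - PayStream.DU d y| / PayStream.dCPF d x y) := by
  classical
  obtain ⟨b, hb, hcost⟩ := CPFAux.exists_coupling d hd
    (x.m.support.card + y.m.support.card) x y hx hy le_rfl
  have hdual := CPFAux.cost_ge_ICPF d hd hb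
  have hcosteq : (b.sum fun p v => |v * (dext d p.1 - dext d p.2)|) = CPFAux.ICPF d x y :=
    le_antisymm hcost hdual
  have hnum := CPFAux.num_eq hb d
  have hIC := CPFAux.dCPF_eq_ICPF d hd x y
  have hcI : |PayStream.DU d x - PayStream.DU d y| ≤ CPFAux.ICPF d x y := by
    rw [← hcosteq, ← hnum, Finsupp.sum, Finsupp.sum]
    exact Finset.abs_sum_le_sum_abs _ _
  refine ⟨b, hb, ?_, ?_⟩
  · simp only [jointVal]
    rw [hnum, hcosteq, hIC]
  · intro b' hb'
    have hnum' := CPFAux.num_eq hb' d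
    have hdual' := CPFAux.cost_ge_ICPF d hd hb'
    simp only [jointVal]
    rw [hnum', hIC]
    rcases eq_or_lt_of_le (abs_nonneg (PayStream.DU d x - PayStream.DU d y)) with h0|h0
    · rw [← h0, zero_div, zero_div]
    · have hIpos : 0 < CPFAux.ICPF d x y := lt_of_lt_of_le h0 hcI
      have hdenpos : 0 < (b'.sum fun p v => |v * (dext d p.1 - dext d p.2)|) :=
        lt_of_lt_of_le hIpos hdual'
      have harg : |PayStream.DU d x - PayStream.DU d y|
            / (b'.sum fun p v => |v * (dext d p.1 - dext d p.2)|)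
          ≤ |PayStream.DU d x - PayStream.DU d y| / CPFAux.ICPF d x y :=
        div_le_div_of_nonneg_left (abs_nonneg _) hIpos hdual'
      have hm1 : |PayStream.DU d x - PayStream.DU d y|
          / (b'.sum fun p v => |v * (dext d p.1 - dext d p.2)|) ∈ Set.Icc (0:ℝ) 1 :=
        ⟨div_nonneg (abs_nonneg _) (le_of_lt hdenpos),
          (div_le_one hdenpos).2 (le_trans hcI hdual')⟩
      have hm2 : |PayStream.DU d x - PayStream.DU d y| / CPFAux.ICPF d x y
          ∈ Set.Icc (0:ℝ) 1 :=
        ⟨div_nonneg (abs_nonneg _) hIpos.le, (div_le_one hIpos).2 hcI⟩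
      exact hHm.monotoneOn hm1 hm2 harg
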